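/- arXiv:2007.05698 — 3 statements merged into one kernel-verified Lean document; each statement's English description precedes it below -/
import Mathlib

section
/- Let ξ be a polynomial over ℂ with deg ξ ≤ 3, let s ∈ ℂ, and define ψ(z) = ξ(z)/(z - s). Then for all z, λ ∈ ℂ with z ≠ s and λ ≠ s, 2ψ(z) - 2ψ(λ) - (z - λ)·(ψ'(z) + ψ'(λ)) = ξ(s)·(z - λ)^3 / ((z - s)^2 (λ - s)^2). -/
set_option maxHeartbeats 1000000


/-- identity for ψ(z) = ξ(z)/(z-s), deg ξ ≤ 3. -/
theorem stmt_5 (ξ : Polynomial ℂ) (hξ : ξ.degree ≤ 3) (s z lam : ℂ)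
    (hzs : z ≠ s) (hls : lam ≠ s) :
    2 * (ξ.eval z / (z - s)) - 2 * (ξ.eval lam / (lam - s)) -
      (z - lam) * ((ξ.derivative.eval z / (z - s) - ξ.eval z / (z - s) ^ 2) +
        (ξ.derivative.eval lam / (lam - s) - ξ.eval lam / (lam - s) ^ 2)) =
    ξ.eval s * (z - lam) ^ 3 / ((z - s) ^ 2 * (lam - s) ^ 2) := by
  have hnd : ξ.natDegree < 4 := by
    have := Polynomial.natDegree_le_of_degree_le (n := 3) hξ
    omega
  have heval : ∀ x : ℂ, ξ.eval x =
      ξ.coeff 0 + ξ.coeff 1 * x + ξ.coeff 2 * x ^ 2 + ξ.coeff 3 * x ^ 3 := by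
    intro x
    rw [Polynomial.eval_eq_sum_range' hnd]
    simp [Finset.sum_range_succ]
  have hd : ∀ x : ℂ, ξ.derivative.eval x =
      ξ.coeff 1 + 2 * ξ.coeff 2 * x + 3 * ξ.coeff 3 * x ^ 2 := by
    intro x
    have hnd' : ξ.derivative.natDegree < 4 :=
      lt_of_le_of_lt (Polynomial.natDegree_derivative_le ξ) (by omega)
    rw [Polynomial.eval_eq_sum_range' hnd']
    have h4 : ξ.coeff 4 = 0 := Polynomial.coeff_eq_zero_of_natDegree_lt hnd
    simp [Finset.sum_range_succ, Polynomial.coeff_derivative, h4]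
    ring
  rw [heval, heval, heval, hd, hd]
  generalize ξ.coeff 0 = a0
  generalize ξ.coeff 1 = a1
  generalize ξ.coeff 2 = a2
  generalize ξ.coeff 3 = a3
  have h1 : z - s ≠ 0 := sub_ne_zero.mpr hzs
  have h2 : lam - s ≠ 0 := sub_ne_zero.mpr hls
  field_simp
  ring
end

section
/- Let ρ be a polynomial of degree ≤ 2 over ℂ and τ, η rational functions with deg τ ≤ 2 and deg(σ·η) ≤ 4 where σ(z) = z·ρ(z). Under the substitution w = 1/z, the Heun class operator σ(z)∂_z² + τ(z)∂_z + η(z) transforms into w³ρ(1/w)∂_w² + w²(2ρ(1/w) - τ(1/w))∂_w + η(1/w), and the transformed coefficients σ̃(w) = w³ρ(1/w), τ̃(w) = w²(2ρ(1/w) - τ(1/w)), η̃(w) = η(1/w) again satisfy the Heun class conditions: σ̃ is a polynomial of degree ≤ 3, τ̃ a polynomial of degree ≤ 2, and σ̃·η̃ a rational function that is a polynomial of degree ≤ 4. -/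
/-- the Heun class is preserved by the substitution `w = 1/z`
which swaps a finite singularity with infinity.  Here `σ(z) = z·ρ(z)` with
`deg ρ ≤ 2`, `deg τ ≤ 2`, and `η = ξ/σ` with `deg ξ ≤ 4`.  The transformed
coefficients `σ̃(w) = w³ρ(1/w)`, `τ̃(w) = w²(2ρ(1/w) - τ(1/w))`,
`η̃(w) = η(1/w)` again satisfy the Heun class conditions, and the operator
transforms as stated. -/
theorem stmt_7 (ρ τ ξ : Polynomial ℂ) (hρ0 : ρ ≠ 0)
    (hρ : ρ.degree ≤ 2) (hτ : τ.degree ≤ 2) (hξ : ξ.degree ≤ 4)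
    (u : ℂ → ℂ) (hu : ∀ z : ℂ, z ≠ 0 → AnalyticAt ℂ u z) :
    (∃ σt : Polynomial ℂ, σt.degree ≤ 3 ∧
      ∀ w : ℂ, w ≠ 0 → σt.eval w = w ^ 3 * ρ.eval w⁻¹) ∧
    (∃ τt : Polynomial ℂ, τt.degree ≤ 2 ∧
      ∀ w : ℂ, w ≠ 0 → τt.eval w = w ^ 2 * (2 * ρ.eval w⁻¹ - τ.eval w⁻¹)) ∧
    (∃ ξt : Polynomial ℂ, ξt.degree ≤ 4 ∧
      ∀ w : ℂ, w ≠ 0 → ρ.eval w⁻¹ ≠ 0 →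
        ξt.eval w = (w ^ 3 * ρ.eval w⁻¹) *
          (ξ.eval w⁻¹ / (w⁻¹ * ρ.eval w⁻¹))) ∧
    (∀ w : ℂ, w ≠ 0 → w⁻¹ * ρ.eval w⁻¹ ≠ 0 →
      (w⁻¹ * ρ.eval w⁻¹) * deriv (deriv u) w⁻¹ + τ.eval w⁻¹ * deriv u w⁻¹ +
        (ξ.eval w⁻¹ / (w⁻¹ * ρ.eval w⁻¹)) * u w⁻¹ =
      (w ^ 3 * ρ.eval w⁻¹) * deriv (deriv (fun x => u x⁻¹)) w +
        w ^ 2 * (2 * ρ.eval w⁻¹ - τ.eval w⁻¹) * deriv (fun x => u x⁻¹) w +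
        (ξ.eval w⁻¹ / (w⁻¹ * ρ.eval w⁻¹)) * u w⁻¹) := by
  have hρn : ρ.natDegree < 3 := by
    have : ρ.natDegree ≤ 2 := Polynomial.natDegree_le_iff_degree_le.2 (by exact_mod_cast hρ)
    omega
  have hτn : τ.natDegree < 3 := by
    have : τ.natDegree ≤ 2 := Polynomial.natDegree_le_iff_degree_le.2 (by exact_mod_cast hτ)
    omega
  have hξn : ξ.natDegree < 5 := by
    have : ξ.natDegree ≤ 4 := Polynomial.natDegree_le_iff_degree_le.2 (by exact_mod_cast hξ)
    omega
  have hρe : ∀ w : ℂ, ρ.eval w = ρ.coeff 0 + ρ.coeff 1 * w + ρ.coeff 2 * w ^ 2 := by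
    intro w
    rw [Polynomial.eval_eq_sum_range' hρn]
    simp only [Finset.sum_range_succ, Finset.sum_range_zero]; ring
  have hτe : ∀ w : ℂ, τ.eval w = τ.coeff 0 + τ.coeff 1 * w + τ.coeff 2 * w ^ 2 := by
    intro w
    rw [Polynomial.eval_eq_sum_range' hτn]
    simp only [Finset.sum_range_succ, Finset.sum_range_zero]; ring
  have hξe : ∀ w : ℂ, ξ.eval w = ξ.coeff 0 + ξ.coeff 1 * w + ξ.coeff 2 * w ^ 2
      + ξ.coeff 3 * w ^ 3 + ξ.coeff 4 * w ^ 4 := by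
    intro w
    rw [Polynomial.eval_eq_sum_range' hξn]
    simp only [Finset.sum_range_succ, Finset.sum_range_zero]; ring
  refine ⟨⟨Polynomial.C (ρ.coeff 0) * Polynomial.X ^ 3 + Polynomial.C (ρ.coeff 1) *
      Polynomial.X ^ 2 + Polynomial.C (ρ.coeff 2) * Polynomial.X, ?_, ?_⟩,
    ⟨Polynomial.C (2 * ρ.coeff 0 - τ.coeff 0) * Polynomial.X ^ 2 +
      Polynomial.C (2 * ρ.coeff 1 - τ.coeff 1) * Polynomial.X +
      Polynomial.C (2 * ρ.coeff 2 - τ.coeff 2), ?_, ?_⟩,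
    ⟨Polynomial.C (ξ.coeff 0) * Polynomial.X ^ 4 + Polynomial.C (ξ.coeff 1) * Polynomial.X ^ 3 +
      Polynomial.C (ξ.coeff 2) * Polynomial.X ^ 2 + Polynomial.C (ξ.coeff 3) * Polynomial.X +
      Polynomial.C (ξ.coeff 4), ?_, ?_⟩, ?_⟩
  · compute_degree
  · intro w hw
    simp only [Polynomial.eval_add, Polynomial.eval_mul, Polynomial.eval_pow,
      Polynomial.eval_C, Polynomial.eval_X, hρe]
    field_simp
  · compute_degree
  · intro w hw
    simp only [Polynomial.eval_add, Polynomial.eval_mul, Polynomial.eval_pow,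
      Polynomial.eval_C, Polynomial.eval_X, hρe, hτe]
    field_simp
    ring
  · compute_degree
  · intro w hw hρw
    have key : (w ^ 3 * ρ.eval w⁻¹) * (ξ.eval w⁻¹ / (w⁻¹ * ρ.eval w⁻¹)) =
        w ^ 4 * ξ.eval w⁻¹ := by
      rw [mul_div_assoc']
      rw [div_eq_iff (mul_ne_zero (inv_ne_zero hw) hρw)]
      field_simp
    rw [key]
    simp only [Polynomial.eval_add, Polynomial.eval_mul, Polynomial.eval_pow,
      Polynomial.eval_C, Polynomial.eval_X]
    rw [hξe]
    field_simp
  · -- the operator identity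
    intro w hw hσ
    have hz : w⁻¹ ≠ 0 := inv_ne_zero hw
    have hρw : ρ.eval w⁻¹ ≠ 0 := fun h => hσ (by rw [h, mul_zero])
    -- derivative of u ∘ inv
    have hud : ∀ z : ℂ, z ≠ 0 → AnalyticAt ℂ (deriv u) z := by
      have h1 : AnalyticOnNhd ℂ u {z : ℂ | z ≠ 0} := fun z hz => hu z hz
      exact fun z hz => h1.deriv z hz
    have hdv : ∀ x : ℂ, x ≠ 0 → HasDerivAt (fun y => u y⁻¹)
        (deriv u x⁻¹ * (-(x ^ 2)⁻¹)) x := by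
      intro x hx
      exact ((hu x⁻¹ (inv_ne_zero hx)).differentiableAt.hasDerivAt).comp x (hasDerivAt_inv hx)
    have hdv' : ∀ x : ℂ, x ≠ 0 → deriv (fun y => u y⁻¹) x = deriv u x⁻¹ * (-(x ^ 2)⁻¹) :=
      fun x hx => (hdv x hx).deriv
    -- second derivative
    have hg : HasDerivAt (fun x : ℂ => deriv u x⁻¹ * (-(x ^ 2)⁻¹))
        ((deriv (deriv u) w⁻¹ * (-(w ^ 2)⁻¹)) * (-(w ^ 2)⁻¹)
          + deriv u w⁻¹ * (-(-(↑2 * w ^ 1) / (w ^ 2) ^ 2))) w := by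
      have h1 : HasDerivAt (fun x : ℂ => deriv u x⁻¹) (deriv (deriv u) w⁻¹ * (-(w ^ 2)⁻¹)) w :=
        ((hud w⁻¹ hz).differentiableAt.hasDerivAt).comp w (hasDerivAt_inv hw)
      have h2 : HasDerivAt (fun x : ℂ => -(x ^ 2)⁻¹) (-(-(↑2 * w ^ 1) / (w ^ 2) ^ 2)) w :=
        (((hasDerivAt_pow 2 w)).inv (pow_ne_zero 2 hw)).neg
      exact h1.mul h2
    have hevq : deriv (fun y : ℂ => u y⁻¹) =ᶠ[nhds w] (fun x => deriv u x⁻¹ * (-(x ^ 2)⁻¹)) := by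
      filter_upwards [eventually_ne_nhds hw] with x hx using hdv' x hx
    have hdd : deriv (deriv (fun y : ℂ => u y⁻¹)) w =
        (deriv (deriv u) w⁻¹ * (-(w ^ 2)⁻¹)) * (-(w ^ 2)⁻¹)
          + deriv u w⁻¹ * (-(-(↑2 * w ^ 1) / (w ^ 2) ^ 2)) := by
      rw [hevq.deriv_eq]; exact hg.deriv
    rw [hdd, hdv' w hw]
    clear hdv hdv' hg hevq hdd hud hu hσ
    generalize u w⁻¹ = U
    generalize deriv (deriv u) w⁻¹ = A
    generalize deriv u w⁻¹ = B
    revert hρw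
    generalize ρ.eval w⁻¹ = P
    generalize τ.eval w⁻¹ = T
    generalize ξ.eval w⁻¹ = E
    intro hP
    field_simp
    ring
end

section
/- Generalized indicial identity at a grounded finite singularity: suppose an equation ∂_z² + p(z)∂_z + q(z) has rank-m singularity at 0 with integer m ≥ 2, p(z) = Σ_{j≥-m} p_j z^j with p_{-m} ≠ 0, q(z) = Σ_{j≥-l} q_j z^j with l ≤ m (grounded form). Then the recursion for a power series solution Σ v_k z^k gives, for each n ≥ 1, the leading relation 0 = n·p_{-m}·v_n + (terms involving v_0,…,v_{n-1}), so for any v₀ there is a unique formal power series solution with that constant term. -/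
open Finset in
/-- The coefficient sequence `v`, extended by `0` to negative indices. -/
noncomputable def laurentExt (v : ℕ → ℂ) : ℤ → ℂ :=
  fun k => if 0 ≤ k then v k.toNat else 0

open Finset in
/-- `IsFormalSolution m l p q v` says that `Σ_{k≥0} v_k z^k` is a formal power
series solution of `u'' + p u' + q u = 0`, i.e. for every `n ∈ ℤ` the
coefficient of `z^n` vanishes:
`(n+2)(n+1) v_{n+2} + Σ_{k=1}^{n+1+m} p_{n+1-k} k v_k + Σ_{k=0}^{n+l} q_{n-k} v_k = 0`. -/
def IsFormalSolution (m l : ℕ) (p q : ℤ → ℂ) (v : ℕ → ℂ) : Prop :=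
  ∀ n : ℤ,
    ((n : ℂ) + 2) * ((n : ℂ) + 1) * laurentExt v (n + 2) +
      (∑ k ∈ Finset.range (n + (m : ℤ) + 2).toNat,
        p (n + 1 - (k : ℤ)) * (k : ℂ) * v k) +
      (∑ k ∈ Finset.range (n + (l : ℤ) + 1).toNat,
        q (n - (k : ℤ)) * v k) = 0

/-- The left-hand side of the `n`-th coefficient equation. -/
noncomputable def eqnLHS (m l : ℕ) (p q : ℤ → ℂ) (v : ℕ → ℂ) (n : ℤ) : ℂ :=
  ((n : ℂ) + 2) * ((n : ℂ) + 1) * laurentExt v (n + 2) +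
    (∑ k ∈ Finset.range (n + (m : ℤ) + 2).toNat,
      p (n + 1 - (k : ℤ)) * (k : ℂ) * v k) +
    (∑ k ∈ Finset.range (n + (l : ℤ) + 1).toNat,
      q (n - (k : ℤ)) * v k)

/-- Extend a finite tuple by zero. -/
noncomputable def extv (n : ℕ) (w : Fin n → ℂ) : ℕ → ℂ :=
  fun k => if h : k < n then w ⟨k, h⟩ else 0

/-- well-founded fixed point for strong recursion -/
noncomputable def fixF (g : ∀ n : ℕ, (Fin n → ℂ) → ℂ) : ℕ → ℂ
  | n => g n (fun i => fixF g i.1)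
termination_by n => n
decreasing_by exact i.2

lemma fixF_eq (g : ∀ n : ℕ, (Fin n → ℂ) → ℂ) (n : ℕ) :
    fixF g n = g n (fun i => fixF g i) := by rw [fixF]

lemma fixF_unique (g : ∀ n : ℕ, (Fin n → ℂ) → ℂ) (v : ℕ → ℂ)
    (hv : ∀ n, v n = g n (fun i => v i)) : v = fixF g := by
  funext n
  induction n using Nat.strongRecOn with
  | ind n ih =>
    rw [hv, fixF_eq]
    congr 1
    funext i
    exact ih i i.2

lemma key_eqn (m l : ℕ) (hm : 2 ≤ m) (hlm : l ≤ m) (p q : ℤ → ℂ) (v : ℕ → ℂ)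
    (n : ℕ) (hn : 1 ≤ n) :
    eqnLHS m l p q v ((n : ℤ) - m - 1) =
      (n : ℂ) * p (-(m : ℤ)) * v n +
        eqnLHS m l p q (extv n (fun i => v i)) ((n : ℤ) - m - 1) := by
  unfold eqnLHS
  have h1 : ((n:ℤ) - m - 1 + m + 2).toNat = n + 1 := by omega
  have h3 : laurentExt (extv n (fun i => v i)) ((n:ℤ) - m - 1 + 2) =
      laurentExt v ((n:ℤ) - m - 1 + 2) := by
    unfold laurentExt extv
    by_cases h : (0:ℤ) ≤ (n:ℤ) - m - 1 + 2
    · have hlt : ((n:ℤ) - m - 1 + 2).toNat < n := by omega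
      simp [h, hlt]
    · simp [h]
  have h4 : ∑ k ∈ Finset.range ((n:ℤ) - m - 1 + l + 1).toNat,
      q ((n:ℤ) - m - 1 - k) * extv n (fun i => v i) k =
      ∑ k ∈ Finset.range ((n:ℤ) - m - 1 + l + 1).toNat,
      q ((n:ℤ) - m - 1 - k) * v k := by
    apply Finset.sum_congr rfl
    intro k hk
    have hk' := Finset.mem_range.mp hk
    have : k < n := by omega
    simp [extv, this]
  have h6 : ∀ k ∈ Finset.range n,
      p ((n:ℤ) - m - 1 + 1 - k) * (k:ℂ) * extv n (fun i => v i) k =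
      p ((n:ℤ) - m - 1 + 1 - k) * (k:ℂ) * v k := by
    intro k hk
    simp [extv, Finset.mem_range.mp hk]
  have h5 : extv n (fun i => v i) n = 0 := by simp [extv]
  rw [h1, h3, h4, Finset.sum_range_succ, Finset.sum_range_succ,
    Finset.sum_congr rfl h6, h5]
  have h7 : (n:ℤ) - m - 1 + 1 - n = -(m:ℤ) := by ring
  rw [h7]
  ring

/-- at a grounded rank-`m` singularity (`m ≥ 2`, `p_{-m} ≠ 0`,
`l ≤ m`), the recursion for a power series solution reads, for each `n ≥ 1`,
`0 = n p_{-m} v_n + (terms involving v_0,…,v_{n-1})`; consequently for every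
`v₀` there is a unique formal power series solution with constant term `v₀`. -/
theorem stmt_19 (m l : ℕ) (hm : 2 ≤ m) (hlm : l ≤ m) (p q : ℤ → ℂ)
    (hpm : p (-(m : ℤ)) ≠ 0)
    (hp : ∀ j : ℤ, j < -(m : ℤ) → p j = 0)
    (hq : ∀ j : ℤ, j < -(l : ℤ) → q j = 0) :
    (∃ F : (n : ℕ) → (Fin n → ℂ) → ℂ,
      ∀ v : ℕ → ℂ, IsFormalSolution m l p q v →
        ∀ n : ℕ, 1 ≤ n →
          (n : ℂ) * p (-(m : ℤ)) * v n + F n (fun i => v i) = 0) ∧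
    (∀ v₀ : ℂ, ∃! v : ℕ → ℂ, v 0 = v₀ ∧ IsFormalSolution m l p q v) := by
  constructor
  · refine ⟨fun n w => eqnLHS m l p q (extv n w) ((n : ℤ) - m - 1), ?_⟩
    intro v hv n hn
    have h' : eqnLHS m l p q v ((n:ℤ) - m - 1) = 0 := hv ((n : ℤ) - m - 1)
    rw [key_eqn m l hm hlm p q v n hn] at h'
    exact h'
  · intro v₀
    set g : ∀ n : ℕ, (Fin n → ℂ) → ℂ := fun n w =>
      if n = 0 then v₀
      else -(eqnLHS m l p q (extv n w) ((n : ℤ) - m - 1)) /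
        ((n : ℂ) * p (-(m : ℤ))) with hg
    have claimA : ∀ v : ℕ → ℂ, (v 0 = v₀ ∧ IsFormalSolution m l p q v) ↔
        ∀ n : ℕ, v n = g n (fun i => v i) := by
      intro v
      constructor
      · rintro ⟨h0, hsol⟩ n
        rcases Nat.eq_zero_or_pos n with rfl | hn
        · simpa [hg] using h0
        · have h' : eqnLHS m l p q v ((n:ℤ) - m - 1) = 0 := hsol ((n : ℤ) - m - 1)
          rw [key_eqn m l hm hlm p q v n hn] at h'
          have hn0 : (n : ℂ) ≠ 0 := Nat.cast_ne_zero.mpr (by omega)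
          have hne : (n : ℂ) * p (-(m : ℤ)) ≠ 0 := mul_ne_zero hn0 hpm
          simp only [hg, if_neg (by omega : n ≠ 0)]
          rw [eq_div_iff hne]
          linear_combination h'
      · intro hrec
        have h0 : v 0 = v₀ := by simpa [hg] using hrec 0
        refine ⟨h0, ?_⟩
        intro N
        show eqnLHS m l p q v N = 0
        by_cases hN : -(m : ℤ) ≤ N
        · set n : ℕ := (N + m + 1).toNat with hn
          have hn1 : 1 ≤ n := by omega
          have hNn : N = (n : ℤ) - m - 1 := by omega
          rw [hNn, key_eqn m l hm hlm p q v n hn1]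
          have hv := hrec n
          rw [hg] at hv
          simp only [if_neg (by omega : n ≠ 0)] at hv
          have hn0 : (n : ℂ) ≠ 0 := Nat.cast_ne_zero.mpr (by omega)
          have hne : (n : ℂ) * p (-(m : ℤ)) ≠ 0 := mul_ne_zero hn0 hpm
          rw [hv]
          field_simp
          ring
        · unfold eqnLHS
          have e1 : laurentExt v (N + 2) = 0 := by
            unfold laurentExt; rw [if_neg (by omega)]
          have e2 : ∑ k ∈ Finset.range (N + m + 2).toNat,
              p (N + 1 - (k:ℤ)) * (k:ℂ) * v k = 0 := by
            apply Finset.sum_eq_zero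
            intro k hk
            have hk' := Finset.mem_range.mp hk
            have : k = 0 := by omega
            subst this; simp
          have e3 : (N + (l:ℤ) + 1).toNat = 0 := by omega
          rw [e1, e2, e3]
          simp
    refine ⟨fixF g, (claimA (fixF g)).mpr (fun n => fixF_eq g n),
      fun v hv => fixF_unique g v ((claimA v).mp hv)⟩
end
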